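/- Let (X,d,𝔪) be a complete, separable metric measure space (possibly non-geodesic) such that for all absolutely continuous μ₀, μ₁ ∈ 𝒫₂^{ac}(X), the set OptGeo(μ₀,μ₁) of optimal dynamical plans is nonempty, and every π ∈ OptGeo(μ₀,μ₁) is induced by a map. Then for any absolutely continuous μ₀, μ₁ ∈ 𝒫₂^{ac}(X), every optimal transport plan σ ∈ Opt(μ₀,μ₁) for the quadratic cost is induced by a map; in particular the optimal plan is unique. -/

import Mathlib

open MeasureTheory Set ENNReal

noncomputable section

variable {X : Type*} [MetricSpace X]

instance : MeasurableSpace C(unitInterval, X) := borel _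
instance : BorelSpace C(unitInterval, X) := ⟨rfl⟩

/-- A constant-speed geodesic parametrized by `[0,1]`. -/
def IsGeodesicMap (γ : C(unitInterval, X)) : Prop :=
  ∀ s t : unitInterval, dist (γ s) (γ t) = |(s : ℝ) - (t : ℝ)| * dist (γ 0) (γ 1)

variable [MeasurableSpace X] [BorelSpace X]

/-- A coupling (transport plan) of `μ₀` and `μ₁`. -/
def IsCoupling (μ₀ μ₁ : Measure X) (σ : Measure (X × X)) : Prop :=
  IsProbabilityMeasure σ ∧ σ.map Prod.fst = μ₀ ∧ σ.map Prod.snd = μ₁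

/-- The quadratic transport cost of a plan. -/
def transportCost (σ : Measure (X × X)) : ℝ≥0∞ :=
  ∫⁻ p, ENNReal.ofReal (dist p.1 p.2 ^ 2) ∂σ

/-- Optimal transport plans for the quadratic cost. -/
def IsOptimalPlan (μ₀ μ₁ : Measure X) (σ : Measure (X × X)) : Prop :=
  IsCoupling μ₀ μ₁ σ ∧
    ∀ σ' : Measure (X × X), IsCoupling μ₀ μ₁ σ' → transportCost σ ≤ transportCost σ'

/-- Optimal dynamical (geodesic) plans: probability measures on `Geo(X)` whose
endpoint marginals form an optimal plan between `μ₀` and `μ₁`. -/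
def IsOptGeoPlan (μ₀ μ₁ : Measure X) (π : Measure C(unitInterval, X)) : Prop :=
  IsProbabilityMeasure π ∧ π {γ | ¬IsGeodesicMap γ} = 0 ∧
    IsOptimalPlan μ₀ μ₁ (π.map fun γ => (γ 0, γ 1))

/-- `μ ∈ 𝒫₂^{ac}(X)`: a Borel probability measure absolutely continuous w.r.t. `𝔪`
with finite second moment. -/
def IsP2ac (𝔪 μ : Measure X) : Prop :=
  IsProbabilityMeasure μ ∧ μ ≪ 𝔪 ∧ ∃ x₀ : X, ∫⁻ x, ENNReal.ofReal (dist x x₀ ^ 2) ∂μ < ∞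

/-- A plan `σ` is induced by a map from `μ₀`. -/
def PlanInducedByMap (μ₀ : Measure X) (σ : Measure (X × X)) : Prop :=
  ∃ T : X → X, Measurable T ∧ σ = μ₀.map fun x => (x, T x)

/-- A dynamical plan `π` is induced by a map from `μ₀`. -/
def GeoPlanInducedByMap (μ₀ : Measure X) (π : Measure C(unitInterval, X)) : Prop :=
  ∃ S : X → C(unitInterval, X), Measurable S ∧ π = μ₀.map S ∧
    ∀ᵐ x ∂μ₀, (S x) 0 = x

set_option linter.unusedSectionVars false

lemma prefst {B : Set X} : Prod.fst ⁻¹' B = B ×ˢ (univ : Set X) := by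
  ext ⟨x, y⟩; simp

lemma presnd {C : Set X} : Prod.snd ⁻¹' C = (univ : Set X) ×ˢ C := by
  ext ⟨x, y⟩; simp

lemma transportCost_add (σ τ : Measure (X × X)) :
    transportCost (σ + τ) = transportCost σ + transportCost τ :=
  lintegral_add_measure _ _ _

lemma transportCost_smul (c : ℝ≥0∞) (σ : Measure (X × X)) :
    transportCost (c • σ) = c * transportCost σ :=
  lintegral_smul_measure _ _

lemma transportCost_ne_top [SecondCountableTopology X] {μ₀ μ₁ : Measure X} {σ : Measure (X × X)}
    (hσ : IsCoupling μ₀ μ₁ σ) {x₀ x₁ : X}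
    (h₀ : ∫⁻ x, ENNReal.ofReal (dist x x₀ ^ 2) ∂μ₀ < ∞)
    (h₁ : ∫⁻ x, ENNReal.ofReal (dist x x₁ ^ 2) ∂μ₁ < ∞) :
    transportCost σ ≠ ∞ := by
  haveI := hσ.1
  have hb : ∀ p : X × X, ENNReal.ofReal (dist p.1 p.2 ^ 2) ≤
      ENNReal.ofReal (3 * dist p.1 x₀ ^ 2) + ENNReal.ofReal (3 * dist x₀ x₁ ^ 2)
        + ENNReal.ofReal (3 * dist x₁ p.2 ^ 2) := by
    intro p
    calc ENNReal.ofReal (dist p.1 p.2 ^ 2)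
        ≤ ENNReal.ofReal ((3 * dist p.1 x₀ ^ 2 + 3 * dist x₀ x₁ ^ 2) + 3 * dist x₁ p.2 ^ 2) := by
          refine ENNReal.ofReal_le_ofReal ?_
          nlinarith [dist_triangle4 p.1 x₀ x₁ p.2, dist_nonneg (x := p.1) (y := x₀),
            dist_nonneg (x := x₀) (y := x₁), dist_nonneg (x := x₁) (y := p.2),
            dist_nonneg (x := p.1) (y := p.2),
            sq_nonneg (dist p.1 x₀ - dist x₀ x₁), sq_nonneg (dist p.1 x₀ - dist x₁ p.2),
            sq_nonneg (dist x₀ x₁ - dist x₁ p.2),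
            sq_nonneg (dist p.1 x₀ + dist x₀ x₁ + dist x₁ p.2 - dist p.1 p.2)]
      _ ≤ ENNReal.ofReal (3 * dist p.1 x₀ ^ 2 + 3 * dist x₀ x₁ ^ 2)
            + ENNReal.ofReal (3 * dist x₁ p.2 ^ 2) := ENNReal.ofReal_add_le
      _ ≤ _ := add_le_add_left ENNReal.ofReal_add_le _
  have hmono := lintegral_mono hb (μ := σ)
  have hm0 : Measurable fun p : X × X => ENNReal.ofReal (3 * dist p.1 x₀ ^ 2) :=
    (ENNReal.continuous_ofReal.comp
      (continuous_const.mul ((continuous_fst.dist continuous_const).pow 2))).measurable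
  have hm1 : Measurable fun p : X × X => ENNReal.ofReal (3 * dist x₁ p.2 ^ 2) :=
    (ENNReal.continuous_ofReal.comp
      (continuous_const.mul ((continuous_const.dist continuous_snd).pow 2))).measurable
  rw [lintegral_add_right _ hm1, lintegral_add_right _ measurable_const] at hmono
  refine ne_top_of_le_ne_top ?_ hmono
  have hd0 : Measurable fun x : X => ENNReal.ofReal (dist x x₀ ^ 2) :=
    (ENNReal.continuous_ofReal.comp ((continuous_id.dist continuous_const).pow 2)).measurable
  have hd1 : Measurable fun x : X => ENNReal.ofReal (dist x x₁ ^ 2) :=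
    (ENNReal.continuous_ofReal.comp ((continuous_id.dist continuous_const).pow 2)).measurable
  have e0 : ∫⁻ p : X × X, ENNReal.ofReal (3 * dist p.1 x₀ ^ 2) ∂σ =
      3 * ∫⁻ x, ENNReal.ofReal (dist x x₀ ^ 2) ∂μ₀ := by
    calc ∫⁻ p : X × X, ENNReal.ofReal (3 * dist p.1 x₀ ^ 2) ∂σ
        = ∫⁻ p : X × X, 3 * ENNReal.ofReal (dist p.1 x₀ ^ 2) ∂σ := by
          congr 1; funext p
          rw [ENNReal.ofReal_mul (by norm_num)]; norm_num
      _ = 3 * ∫⁻ p : X × X, ENNReal.ofReal (dist p.1 x₀ ^ 2) ∂σ :=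
          lintegral_const_mul 3 (by exact hd0.comp measurable_fst)
      _ = 3 * ∫⁻ x, ENNReal.ofReal (dist x x₀ ^ 2) ∂μ₀ := by
          rw [← hσ.2.1, lintegral_map hd0 measurable_fst]
  have e1 : ∫⁻ p : X × X, ENNReal.ofReal (3 * dist x₁ p.2 ^ 2) ∂σ =
      3 * ∫⁻ x, ENNReal.ofReal (dist x x₁ ^ 2) ∂μ₁ := by
    calc ∫⁻ p : X × X, ENNReal.ofReal (3 * dist x₁ p.2 ^ 2) ∂σ
        = ∫⁻ p : X × X, 3 * ENNReal.ofReal (dist p.2 x₁ ^ 2) ∂σ := by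
          congr 1; funext p
          rw [ENNReal.ofReal_mul (by norm_num), dist_comm]; norm_num
      _ = 3 * ∫⁻ p : X × X, ENNReal.ofReal (dist p.2 x₁ ^ 2) ∂σ :=
          lintegral_const_mul 3 (by exact hd1.comp measurable_snd)
      _ = 3 * ∫⁻ x, ENNReal.ofReal (dist x x₁ ^ 2) ∂μ₁ := by
          rw [← hσ.2.2, lintegral_map hd1 measurable_snd]
  rw [e0, e1, lintegral_const]
  simp only [measure_univ, mul_one]
  exact ENNReal.add_ne_top.2 ⟨ENNReal.add_ne_top.2 ⟨ENNReal.mul_ne_top (by norm_num) h₀.ne,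
    ofReal_ne_top⟩, ENNReal.mul_ne_top (by norm_num) h₁.ne⟩

lemma eq_map_of_ae_graph {μ₀ : Measure X} {σ : Measure (X × X)}
    (hfst : σ.map Prod.fst = μ₀) {T : X → X} (hT : Measurable T)
    (hae : ∀ᵐ p ∂σ, p.2 = T p.1) : σ = μ₀.map fun x => (x, T x) := by
  have hg : Measurable fun x : X => (x, T x) := measurable_id.prodMk hT
  calc σ = σ.map id := (Measure.map_id).symm
    _ = σ.map ((fun x : X => (x, T x)) ∘ Prod.fst) := by
        refine Measure.map_congr ?_
        filter_upwards [hae] with p hp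
        simp only [id_eq, Function.comp_apply]
        exact Prod.ext rfl hp
    _ = (σ.map Prod.fst).map (fun x : X => (x, T x)) := (Measure.map_map hg measurable_fst).symm
    _ = μ₀.map _ := by rw [hfst]

lemma subplan_optimal [SecondCountableTopology X] {μ₀ μ₁ : Measure X} {σ : Measure (X × X)}
    (hσ : IsOptimalPlan μ₀ μ₁ σ) (hfin : transportCost σ ≠ ∞)
    {S : Set (X × X)} (hS : MeasurableSet S) (hc0 : σ S ≠ 0) :
    IsOptimalPlan (((σ S)⁻¹ • σ.restrict S).map Prod.fst)
      (((σ S)⁻¹ • σ.restrict S).map Prod.snd) ((σ S)⁻¹ • σ.restrict S) := by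
  haveI hprob : IsProbabilityMeasure σ := hσ.1.1
  set c := σ S with hc
  have hct : c ≠ ∞ := (measure_ne_top σ S)
  have hcle : c ≤ 1 := by rw [hc, ← measure_univ (μ := σ)]; exact measure_mono (subset_univ S)
  set σb := c⁻¹ • σ.restrict S with hσb
  have hσbprob : IsProbabilityMeasure σb := by
    constructor
    rw [hσb, Measure.smul_apply, Measure.restrict_apply_univ, smul_eq_mul]
    exact ENNReal.inv_mul_cancel hc0 hct
  refine ⟨⟨hσbprob, rfl, rfl⟩, ?_⟩
  intro τ hτ
  set σ' := c • τ + σ.restrict Sᶜ with hσ'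
  have hrS : c • σb = σ.restrict S := by
    rw [hσb, smul_smul, ENNReal.mul_inv_cancel hc0 hct, one_smul]
  have hfstb : (σ.restrict S).map Prod.fst = c • σb.map Prod.fst := by
    rw [← hrS, Measure.map_smul]
  have hsndb : (σ.restrict S).map Prod.snd = c • σb.map Prod.snd := by
    rw [← hrS, Measure.map_smul]
  have hτprob : IsProbabilityMeasure τ := hτ.1
  have hcoup' : IsCoupling μ₀ μ₁ σ' := by
    refine ⟨?_, ?_, ?_⟩
    · constructor
      rw [hσ', Measure.add_apply, Measure.smul_apply, measure_univ, smul_eq_mul, mul_one,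
        Measure.restrict_apply_univ, measure_compl hS hct, measure_univ]
      exact add_tsub_cancel_of_le hcle
    · rw [hσ', Measure.map_add _ _ measurable_fst, Measure.map_smul, hτ.2.1, ← hfstb,
        ← Measure.map_add _ _ measurable_fst, Measure.restrict_add_restrict_compl hS, hσ.1.2.1]
    · rw [hσ', Measure.map_add _ _ measurable_snd, Measure.map_smul, hτ.2.2, ← hsndb,
        ← Measure.map_add _ _ measurable_snd, Measure.restrict_add_restrict_compl hS, hσ.1.2.2]
  have hle := hσ.2 σ' hcoup'
  have hsplit : transportCost σ = transportCost (σ.restrict S) + transportCost (σ.restrict Sᶜ) := by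
    conv_lhs => rw [← Measure.restrict_add_restrict_compl (μ := σ) hS]
    exact transportCost_add _ _
  have hrest_ne : transportCost (σ.restrict Sᶜ) ≠ ∞ := by
    refine ne_top_of_le_ne_top hfin ?_
    rw [hsplit]
    exact le_add_self
  have hcost' : transportCost σ' = c * transportCost τ + transportCost (σ.restrict Sᶜ) := by
    rw [hσ', transportCost_add, transportCost_smul]
  have hcostS : transportCost (σ.restrict S) = c * transportCost σb := by
    rw [← hrS, transportCost_smul]
  rw [hsplit, hcost', hcostS] at hle
  have := (ENNReal.add_le_add_iff_right hrest_ne).1 hle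
  exact (ENNReal.mul_le_mul_iff_right hc0 hct).1 this

lemma isP2ac_of_le {𝔪 ρ ξ : Measure X} (h : IsP2ac 𝔪 ρ) (hprob : IsProbabilityMeasure ξ)
    {c : ℝ≥0∞} (hc : c ≠ ∞) (hle : ξ ≤ c • ρ) : IsP2ac 𝔪 ξ := by
  obtain ⟨hρprob, hac, x₀, hx₀⟩ := h
  refine ⟨hprob, ?_, x₀, ?_⟩
  · intro N hN
    have := hle N
    rw [Measure.smul_apply, hac hN, smul_eq_mul, mul_zero] at this
    exact le_antisymm this zero_le
  · calc ∫⁻ x, ENNReal.ofReal (dist x x₀ ^ 2) ∂ξ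
        ≤ ∫⁻ x, ENNReal.ofReal (dist x x₀ ^ 2) ∂(c • ρ) := lintegral_mono' hle le_rfl
      _ = c * ∫⁻ x, ENNReal.ofReal (dist x x₀ ^ 2) ∂ρ := lintegral_smul_measure _ _
      _ < ∞ := ENNReal.mul_lt_top hc.lt_top hx₀

lemma invFun_measurable {α β : Type*} [MeasurableSpace α] [MeasurableSpace β] [Nonempty α]
    {f : α → β} (hf : MeasurableEmbedding f) : Measurable (Function.invFun f) := by
  intro s hs
  have him : MeasurableSet (f '' s) := hf.measurableSet_image.2 hs
  have hrange : MeasurableSet (range f) := hf.measurableSet_range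
  have hL : ∀ a : α, Function.invFun f (f a) = a := Function.leftInverse_invFun hf.injective
  have hjunk : ∀ y, y ∉ range f → Function.invFun f y = Classical.arbitrary α := by
    intro y hy
    rw [Function.invFun]
    exact dif_neg (by simpa [Set.mem_range] using hy)
  by_cases harb : (Classical.arbitrary α) ∈ s
  · have : Function.invFun f ⁻¹' s = f '' s ∪ (range f)ᶜ := by
      ext y
      by_cases hy : y ∈ range f
      · obtain ⟨a, rfl⟩ := hy
        simp [hL a, hf.injective.mem_set_image, Set.mem_range_self]
      · have h1 : y ∉ f '' s := fun h => hy (Set.image_subset_range f s h)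
        simp [hjunk y hy, harb, hy, h1]
    rw [this]; exact him.union hrange.compl
  · have : Function.invFun f ⁻¹' s = f '' s := by
      ext y
      by_cases hy : y ∈ range f
      · obtain ⟨a, rfl⟩ := hy
        simp [hL a, hf.injective.mem_set_image]
      · have h1 : y ∉ f '' s := fun h => hy (Set.image_subset_range f s h)
        simp [hjunk y hy, harb, h1]
    rw [this]; exact him

lemma induced_of_graph_basis [CompleteSpace X] [TopologicalSpace.SeparableSpace X]
    [Nonempty X] {μ₀ μ₁ : Measure X} {σ : Measure (X × X)} (hσc : IsCoupling μ₀ μ₁ σ)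
    (hkey : ∀ U : ↥(TopologicalSpace.countableBasis X), ∃ F : Set X, MeasurableSet F ∧
      ∀ B : Set X, MeasurableSet B → σ (B ×ˢ (U : Set X)) = μ₀ (B ∩ F)) :
    PlanInducedByMap μ₀ σ := by
  haveI : SecondCountableTopology X := UniformSpace.secondCountable_of_separable X
  haveI : IsProbabilityMeasure σ := hσc.1
  haveI : Countable ↥(TopologicalSpace.countableBasis X) :=
    (TopologicalSpace.countable_countableBasis X).to_subtype
  choose F hFm hFk using hkey
  have hUmeas : ∀ U : ↥(TopologicalSpace.countableBasis X), MeasurableSet (U : Set X) :=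
    fun U => ((TopologicalSpace.isBasis_countableBasis X).isOpen U.2).measurableSet
  have hμ₀B : ∀ B : Set X, MeasurableSet B → σ (B ×ˢ (univ : Set X)) = μ₀ B := by
    intro B hB
    rw [← hσc.2.1, Measure.map_apply measurable_fst hB, prefst]
  have h1 : ∀ U, σ ((F U)ᶜ ×ˢ (U : Set X)) = 0 := by
    intro U
    rw [hFk U _ (hFm U).compl, Set.compl_inter_self, measure_empty]
  have h2 : ∀ U, σ ((F U) ×ˢ ((U : Set X))ᶜ) = 0 := by
    intro U
    have hdisj : Disjoint ((F U) ×ˢ (U : Set X)) ((F U) ×ˢ ((U : Set X))ᶜ) := by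
      rw [Set.disjoint_left]
      rintro ⟨x, y⟩ ⟨_, hy⟩ ⟨_, hy'⟩
      exact hy' hy
    have hunion := measure_union hdisj ((hFm U).prod (hUmeas U).compl) (μ := σ)
    rw [← Set.prod_union, Set.union_compl_self, hμ₀B _ (hFm U),
      hFk U _ (hFm U), Set.inter_self] at hunion
    have hfin : μ₀ (F U) ≠ ∞ := by
      haveI : IsProbabilityMeasure μ₀ := by
        rw [← hσc.2.1]; exact Measure.isProbabilityMeasure_map measurable_fst.aemeasurable
      exact measure_ne_top _ _
    nth_rewrite 1 [← add_zero (μ₀ (F U))] at hunion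
    exact ((ENNReal.add_right_inj hfin).1 hunion).symm
  have hpattern : ∀ᵐ p ∂σ, ∀ U : ↥(TopologicalSpace.countableBasis X),
      (p.2 ∈ (U : Set X) ↔ p.1 ∈ F U) := by
    rw [ae_all_iff]
    intro U
    rw [ae_iff]
    refine measure_mono_null ?_ (measure_union_null (h1 U) (h2 U))
    rintro ⟨x, y⟩ hp
    simp only [Set.mem_setOf_eq] at hp
    by_cases hy : y ∈ (U : Set X)
    · exact Or.inl ⟨fun hx => hp ⟨fun _ => hx, fun _ => hy⟩, hy⟩
    · refine Or.inr ⟨?_, hy⟩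
      by_contra hx
      exact hp ⟨fun h => (hy h).elim, fun h => (hx h).elim⟩
  classical
  set j : X → ↥(TopologicalSpace.countableBasis X) → Bool :=
    fun y U => if y ∈ (U : Set X) then true else false with hj
  set K : X → ↥(TopologicalSpace.countableBasis X) → Bool :=
    fun x U => if x ∈ F U then true else false with hK
  have hjm : Measurable j :=
    measurable_pi_lambda _ fun U => Measurable.ite (hUmeas U) measurable_const measurable_const
  have hKm : Measurable K :=
    measurable_pi_lambda _ fun U => Measurable.ite (hFm U) measurable_const measurable_const
  have hjinj : Function.Injective j := by
    intro y y' h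
    by_contra hne
    obtain ⟨U, hU𝒰, hyU, hsub⟩ :=
      (TopologicalSpace.isBasis_countableBasis X).exists_subset_of_mem_open
        (show y ∈ ({y'}ᶜ : Set X) from hne) isOpen_compl_singleton
    have hy'U : y' ∉ U := fun hmem => (hsub hmem) rfl
    have := congrFun h ⟨U, hU𝒰⟩
    rw [hj] at this
    simp only [hyU, if_true, hy'U, if_false] at this
    exact Bool.noConfusion this
  have hemb : MeasurableEmbedding j := hjm.measurableEmbedding hjinj
  set T : X → X := Function.invFun j ∘ K with hT
  have hTm : Measurable T := (invFun_measurable hemb).comp hKm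
  have hae : ∀ᵐ p ∂σ, p.2 = T p.1 := by
    filter_upwards [hpattern] with p hp
    have hjK : j p.2 = K p.1 := funext fun U => if_congr (hp U) rfl rfl
    show p.2 = Function.invFun j (K p.1)
    rw [← hjK, Function.leftInverse_invFun hjinj]
  exact ⟨T, hTm, eq_map_of_ae_graph hσc.2.1 hTm hae⟩

lemma map_comb {Y Z : Type*} [MeasurableSpace Y] [MeasurableSpace Z] (w₁ w₂ : ℝ≥0∞)
    (κ₁ κ₂ : Measure Y) {h : Y → Z} (hh : Measurable h) :
    (w₁ • κ₁ + w₂ • κ₂).map h = w₁ • κ₁.map h + w₂ • κ₂.map h := by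
  rw [Measure.map_add _ _ hh, Measure.map_smul, Measure.map_smul]

lemma cost_comb (w v : ℝ≥0∞) (κ₁ κ₂ : Measure (X × X)) :
    transportCost (w • κ₁ + v • κ₂) = w * transportCost κ₁ + v * transportCost κ₂ := by
  rw [transportCost_add, transportCost_smul, transportCost_smul]

lemma optimal_plan_induced [CompleteSpace X] [TopologicalSpace.SeparableSpace X]
    (𝔪 : Measure X)
    (hexists : ∀ μ₀ μ₁ : Measure X, IsP2ac 𝔪 μ₀ → IsP2ac 𝔪 μ₁ →
      ∃ π : Measure C(unitInterval, X), IsOptGeoPlan μ₀ μ₁ π)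
    (hmap : ∀ μ₀ μ₁ : Measure X, IsP2ac 𝔪 μ₀ → IsP2ac 𝔪 μ₁ →
      ∀ π : Measure C(unitInterval, X), IsOptGeoPlan μ₀ μ₁ π →
        GeoPlanInducedByMap μ₀ π)
    (μ₀ μ₁ : Measure X) (h₀ : IsP2ac 𝔪 μ₀) (h₁ : IsP2ac 𝔪 μ₁)
    (σ : Measure (X × X)) (hσ : IsOptimalPlan μ₀ μ₁ σ) : PlanInducedByMap μ₀ σ := by
  haveI : SecondCountableTopology X := UniformSpace.secondCountable_of_separable X
  haveI hσprob : IsProbabilityMeasure σ := hσ.1.1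
  haveI hμ₀prob : IsProbabilityMeasure μ₀ := h₀.1
  obtain ⟨x₀, hx₀⟩ := h₀.2.2
  obtain ⟨x₁, hx₁⟩ := h₁.2.2
  haveI : Nonempty X := ⟨x₀⟩
  have hfin : transportCost σ ≠ ∞ := transportCost_ne_top hσ.1 hx₀ hx₁
  have hμ₀B : ∀ B : Set X, MeasurableSet B → σ (B ×ˢ (univ : Set X)) = μ₀ B := by
    intro B hB
    rw [← hσ.1.2.1, Measure.map_apply measurable_fst hB, prefst]
  set alU : Set X → Measure X := fun U => (σ.restrict ((univ : Set X) ×ˢ U)).map Prod.fst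
    with halU
  have halU_apply : ∀ U : Set X, MeasurableSet U → ∀ B : Set X, MeasurableSet B →
      alU U B = σ (B ×ˢ U) := by
    intro U hU B hB
    rw [halU]
    rw [Measure.map_apply measurable_fst hB, Measure.restrict_apply (measurable_fst hB),
      prefst, Set.prod_inter_prod, Set.inter_univ, Set.univ_inter]
  have halU_le : ∀ U : Set X, MeasurableSet U → alU U ≤ μ₀ := by
    intro U hU
    refine Measure.le_iff.2 fun B hB => ?_
    rw [halU_apply U hU B hB, ← hμ₀B B hB]
    exact measure_mono (Set.prod_mono_right (subset_univ U))
  set f : Set X → X → ℝ≥0∞ := fun U => (alU U).rnDeriv μ₀ with hf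
  have hfm : ∀ U, Measurable (f U) := fun U => Measure.measurable_rnDeriv _ _
  have hwd : ∀ U : Set X, MeasurableSet U → ∀ B : Set X, MeasurableSet B →
      σ (B ×ˢ U) = ∫⁻ x in B, f U x ∂μ₀ := by
    intro U hU B hB
    haveI : IsFiniteMeasure (alU U) :=
      ⟨lt_of_le_of_lt (Measure.le_iff'.1 (halU_le U hU) univ) (measure_lt_top μ₀ univ)⟩
    rw [← halU_apply U hU B hB,
      ← Measure.withDensity_rnDeriv_eq (alU U) μ₀ ((halU_le U hU).absolutelyContinuous),
      withDensity_apply _ hB]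
  by_cases hdic : ∀ U : ↥(TopologicalSpace.countableBasis X),
      μ₀ {x | 0 < f (U : Set X) x ∧ f (U : Set X) x < 1} = 0
  · -- every conditional is Dirac: build the map
    refine induced_of_graph_basis hσ.1 ?_
    intro U
    have hU : MeasurableSet (U : Set X) :=
      ((TopologicalSpace.isBasis_countableBasis X).isOpen U.2).measurableSet
    set g := f (U : Set X) with hg
    have hae01 : ∀ᵐ x ∂μ₀, g x = 0 ∨ 1 ≤ g x := by
      have h' : ∀ᵐ x ∂μ₀, ¬(0 < g x ∧ g x < 1) := by
        rw [ae_iff]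
        simpa [not_not] using hdic U
      filter_upwards [h'] with x hx
      rcases eq_or_ne (g x) 0 with h0 | h0
      · exact Or.inl h0
      · right
        by_contra hlt
        exact hx ⟨pos_iff_ne_zero.2 h0, not_le.1 hlt⟩
    set F := {x | 1 ≤ g x} with hF
    have hFmeas : MeasurableSet F := measurableSet_le measurable_const (hfm _)
    refine ⟨F, hFmeas, fun B hB => ?_⟩
    rw [hwd _ hU B hB]
    have hBF : MeasurableSet (B ∩ F) := hB.inter hFmeas
    have hsplit : ∫⁻ x in B, g x ∂μ₀ =
        (∫⁻ x in B ∩ F, g x ∂μ₀) + ∫⁻ x in B \ F, g x ∂μ₀ :=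
      (lintegral_inter_add_diff g B hFmeas).symm
    have hzero : ∫⁻ x in B \ F, g x ∂μ₀ = 0 := by
      rw [lintegral_eq_zero_iff (hfm _), Filter.EventuallyEq, ae_restrict_iff' (hB.diff hFmeas)]
      filter_upwards [hae01] with x hx hxB
      rcases hx with h | h
      · exact h
      · exact absurd h hxB.2
    have hone : ∫⁻ x in B ∩ F, g x ∂μ₀ = μ₀ (B ∩ F) := by
      refine le_antisymm ?_ ?_
      · haveI : IsFiniteMeasure (alU (U : Set X)) :=
          ⟨lt_of_le_of_lt (Measure.le_iff'.1 (halU_le _ hU) univ) (measure_lt_top μ₀ univ)⟩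
        calc ∫⁻ x in B ∩ F, g x ∂μ₀ = (μ₀.withDensity g) (B ∩ F) :=
              (withDensity_apply _ hBF).symm
          _ = alU (U : Set X) (B ∩ F) := by
              rw [hg, hf, Measure.withDensity_rnDeriv_eq (alU _) μ₀
                ((halU_le _ hU).absolutelyContinuous)]
          _ ≤ μ₀ (B ∩ F) := Measure.le_iff.1 (halU_le _ hU) _ hBF
      · calc μ₀ (B ∩ F) = ∫⁻ _ in B ∩ F, 1 ∂μ₀ := (setLIntegral_one _).symm
          _ ≤ ∫⁻ x in B ∩ F, g x ∂μ₀ :=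
            lintegral_mono_ae ((ae_restrict_iff' hBF).2 (ae_of_all _ fun x hx => hx.2))
    rw [hsplit, hzero, add_zero, hone]
  · -- some conditional is non-Dirac: derive a contradiction
    push_neg at hdic
    obtain ⟨U, hEne⟩ := hdic
    have hUm : MeasurableSet (U : Set X) :=
      ((TopologicalSpace.isBasis_countableBasis X).isOpen U.2).measurableSet
    set Uset := (U : Set X) with hUset
    set g := f Uset with hg
    set E := {x | 0 < g x ∧ g x < 1} with hE
    have hEm : MeasurableSet E := (hfm Uset) measurableSet_Ioo
    set S1 := E ×ˢ Uset with hS1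
    set S2 := E ×ˢ Usetᶜ with hS2
    set SE := E ×ˢ (univ : Set X) with hSE
    have hS1m : MeasurableSet S1 := hEm.prod hUm
    have hS2m : MeasurableSet S2 := hEm.prod hUm.compl
    have hSEm : MeasurableSet SE := hEm.prod MeasurableSet.univ
    have hE0 : μ₀ E ≠ 0 := hEne
    have absurd_ae : ∀ Q : X → Prop, (∀ᵐ x ∂μ₀, x ∈ E → Q x) → (∀ x ∈ E, ¬ Q x) → False := by
      intro Q hae hnot
      have h' : ∀ᵐ x ∂μ₀, x ∉ E := by
        filter_upwards [hae] with x hx hxE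
        exact hnot x hxE (hx hxE)
      rw [ae_iff] at h'
      apply hE0
      simpa [not_not] using h'
    have ha_eq : σ S1 = ∫⁻ x in E, g x ∂μ₀ := hwd _ hUm E hEm
    have hunion : S1 ∪ S2 = SE := by rw [hS1, hS2, hSE, ← Set.prod_union, Set.union_compl_self]
    have hdisj : Disjoint S1 S2 := by
      rw [Set.disjoint_left]
      rintro ⟨x, y⟩ ⟨_, hy⟩ ⟨_, hy'⟩
      exact hy' hy
    have hab : σ S1 + σ S2 = σ SE := by rw [← measure_union hdisj hS2m, hunion]
    have hm_eq : σ SE = μ₀ E := hμ₀B E hEm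
    have ha0 : σ S1 ≠ 0 := by
      intro h
      have h' : ∫⁻ x in E, g x ∂μ₀ = 0 := by rw [← ha_eq]; exact h
      have h'' := (lintegral_eq_zero_iff (hfm _)).1 h'
      rw [Filter.EventuallyEq, ae_restrict_iff' hEm] at h''
      exact absurd_ae _ h'' fun x hx => hx.1.ne'
    have hat : σ S1 ≠ ∞ := measure_ne_top σ _
    have hbt : σ S2 ≠ ∞ := measure_ne_top σ _
    have hmt : σ SE ≠ ∞ := measure_ne_top σ _
    have hm0 : σ SE ≠ 0 := by
      rw [← hab]
      intro h
      exact ha0 (add_eq_zero.1 h).1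
    have hb0 : σ S2 ≠ 0 := by
      intro h
      have haem : σ S1 = σ SE := by rw [← hab, h, add_zero]
      have hint : ∫⁻ x in E, g x ∂μ₀ = μ₀ E := by rw [← ha_eq, haem, hm_eq]
      have hgle : g ≤ᵐ[μ₀.restrict E] 1 :=
        (ae_restrict_iff' hEm).2 (ae_of_all _ fun x hx => hx.2.le)
      have hfinE : ∫⁻ x in E, g x ∂μ₀ ≠ ∞ := by rw [hint]; exact measure_ne_top _ _
      have hsub := lintegral_sub (μ := μ₀.restrict E) (f := fun _ : X => (1 : ℝ≥0∞))
        (hfm Uset) hfinE hgle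
      rw [hint, lintegral_one, Measure.restrict_apply_univ, tsub_self] at hsub
      have h'' := (lintegral_eq_zero_iff
        ((measurable_const (a := (1 : ℝ≥0∞))).sub (hfm Uset))).1 hsub
      rw [Filter.EventuallyEq, ae_restrict_iff' hEm] at h''
      refine absurd_ae _ h'' fun x hx h10 => ?_
      exact absurd (tsub_eq_zero_iff_le.1 h10) (not_le.2 hx.2)
    have hopt1 := subplan_optimal hσ hfin hS1m ha0
    have hopt2 := subplan_optimal hσ hfin hS2m hb0
    have hoptE := subplan_optimal hσ hfin hSEm hm0
    set σb1 := (σ S1)⁻¹ • σ.restrict S1 with hσb1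
    set σb2 := (σ S2)⁻¹ • σ.restrict S2 with hσb2
    set σbE := (σ SE)⁻¹ • σ.restrict SE with hσbE
    haveI hp1 : IsProbabilityMeasure σb1 := hopt1.1.1
    haveI hp2 : IsProbabilityMeasure σb2 := hopt2.1.1
    haveI hpE : IsProbabilityMeasure σbE := hoptE.1.1
    set α₁ := σb1.map Prod.fst with hα₁
    set ν₁ := σb1.map Prod.snd with hν₁
    set α₂ := σb2.map Prod.fst with hα₂
    set ν₂ := σb2.map Prod.snd with hν₂
    set μb := σbE.map Prod.fst with hμb
    set νb := σbE.map Prod.snd with hνb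
    -- P2ac facts
    have hmarg_fst : ∀ S : Set (X × X), (σ.restrict S).map Prod.fst ≤ μ₀ := by
      intro S
      rw [← hσ.1.2.1]
      exact Measure.map_mono Measure.restrict_le_self measurable_fst
    have hmarg_snd : ∀ S : Set (X × X), (σ.restrict S).map Prod.snd ≤ μ₁ := by
      intro S
      rw [← hσ.1.2.2]
      exact Measure.map_mono Measure.restrict_le_self measurable_snd
    have smul_mono : ∀ (c : ℝ≥0∞) (ξ ρ : Measure X), ξ ≤ ρ → c • ξ ≤ c • ρ := by
      intro c ξ ρ h
      refine Measure.le_iff.2 fun s hs => ?_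
      simp only [Measure.smul_apply, smul_eq_mul]
      exact mul_le_mul_right (Measure.le_iff'.1 h s) _
    have hP2 : ∀ (c : ℝ≥0∞), c ≠ 0 → ∀ S : Set (X × X),
        IsProbabilityMeasure ((c⁻¹ • σ.restrict S).map Prod.fst) →
        IsP2ac 𝔪 ((c⁻¹ • σ.restrict S).map Prod.fst) := by
      intro c hc S hprob
      refine isP2ac_of_le h₀ hprob (ENNReal.inv_ne_top.2 hc) ?_
      rw [Measure.map_smul]
      exact smul_mono _ _ _ (hmarg_fst S)
    have hP2' : ∀ (c : ℝ≥0∞), c ≠ 0 → ∀ S : Set (X × X),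
        IsProbabilityMeasure ((c⁻¹ • σ.restrict S).map Prod.snd) →
        IsP2ac 𝔪 ((c⁻¹ • σ.restrict S).map Prod.snd) := by
      intro c hc S hprob
      refine isP2ac_of_le h₁ hprob (ENNReal.inv_ne_top.2 hc) ?_
      rw [Measure.map_smul]
      exact smul_mono _ _ _ (hmarg_snd S)
    have hP2α₁ : IsP2ac 𝔪 α₁ :=
      hP2 _ ha0 _ (Measure.isProbabilityMeasure_map measurable_fst.aemeasurable)
    have hP2ν₁ : IsP2ac 𝔪 ν₁ :=
      hP2' _ ha0 _ (Measure.isProbabilityMeasure_map measurable_snd.aemeasurable)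
    have hP2α₂ : IsP2ac 𝔪 α₂ :=
      hP2 _ hb0 _ (Measure.isProbabilityMeasure_map measurable_fst.aemeasurable)
    have hP2ν₂ : IsP2ac 𝔪 ν₂ :=
      hP2' _ hb0 _ (Measure.isProbabilityMeasure_map measurable_snd.aemeasurable)
    have hP2μb : IsP2ac 𝔪 μb :=
      hP2 _ hm0 _ (Measure.isProbabilityMeasure_map measurable_fst.aemeasurable)
    have hP2νb : IsP2ac 𝔪 νb :=
      hP2' _ hm0 _ (Measure.isProbabilityMeasure_map measurable_snd.aemeasurable)
    obtain ⟨π₁, hπ₁⟩ := hexists α₁ ν₁ hP2α₁ hP2ν₁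
    obtain ⟨π₂, hπ₂⟩ := hexists α₂ ν₂ hP2α₂ hP2ν₂
    have hec : Continuous fun γ : C(unitInterval, X) => (γ 0, γ 1) := by fun_prop
    have hem : Measurable fun γ : C(unitInterval, X) => (γ 0, γ 1) := hec.measurable
    set ρ₁ := π₁.map (fun γ : C(unitInterval, X) => (γ 0, γ 1)) with hρ₁
    set ρ₂ := π₂.map (fun γ : C(unitInterval, X) => (γ 0, γ 1)) with hρ₂
    set w₁ := σ S1 * (σ SE)⁻¹ with hw₁
    set w₂ := σ S2 * (σ SE)⁻¹ with hw₂
    have hw : w₁ + w₂ = 1 := by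
      rw [hw₁, hw₂, ← add_mul, hab, ENNReal.mul_inv_cancel hm0 hmt]
    have hw₁0 : w₁ ≠ 0 := mul_ne_zero ha0 (ENNReal.inv_ne_zero.2 hmt)
    have hw₂0 : w₂ ≠ 0 := mul_ne_zero hb0 (ENNReal.inv_ne_zero.2 hmt)
    set π := w₁ • π₁ + w₂ • π₂ with hπ
    have hdecomp : σbE = w₁ • σb1 + w₂ • σb2 := by
      rw [hσb1, hσb2, hσbE, smul_smul, smul_smul, hw₁, hw₂,
        mul_right_comm (σ S1) ((σ SE)⁻¹) ((σ S1)⁻¹),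
        ENNReal.mul_inv_cancel ha0 hat, one_mul,
        mul_right_comm (σ S2) ((σ SE)⁻¹) ((σ S2)⁻¹),
        ENNReal.mul_inv_cancel hb0 hbt, one_mul, ← smul_add,
        ← Measure.restrict_union hdisj hS2m, hunion]
    have hρdecomp : π.map (fun γ : C(unitInterval, X) => (γ 0, γ 1)) = w₁ • ρ₁ + w₂ • ρ₂ := by
      rw [hπ, Measure.map_add _ _ hem, Measure.map_smul, Measure.map_smul, hρ₁, hρ₂]
    have hρ₁fst : ρ₁.map Prod.fst = α₁ := hπ₁.2.2.1.2.1
    have hρ₁snd : ρ₁.map Prod.snd = ν₁ := hπ₁.2.2.1.2.2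
    have hρ₂fst : ρ₂.map Prod.fst = α₂ := hπ₂.2.2.1.2.1
    have hρ₂snd : ρ₂.map Prod.snd = ν₂ := hπ₂.2.2.1.2.2
    haveI hρ₁prob : IsProbabilityMeasure ρ₁ := hπ₁.2.2.1.1
    haveI hρ₂prob : IsProbabilityMeasure ρ₂ := hπ₂.2.2.1.1
    have hρfst : (π.map fun γ : C(unitInterval, X) => (γ 0, γ 1)).map Prod.fst = μb := by
      rw [hρdecomp, map_comb _ _ _ _ measurable_fst, hρ₁fst, hρ₂fst, hμb, hdecomp,
        map_comb _ _ _ _ measurable_fst, ← hα₁, ← hα₂]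
    have hρsnd : (π.map fun γ : C(unitInterval, X) => (γ 0, γ 1)).map Prod.snd = νb := by
      rw [hρdecomp, map_comb _ _ _ _ measurable_snd, hρ₁snd, hρ₂snd, hνb, hdecomp,
        map_comb _ _ _ _ measurable_snd, ← hν₁, ← hν₂]
    haveI hπprob : IsProbabilityMeasure π := by
      constructor
      haveI := hπ₁.1
      haveI := hπ₂.1
      rw [hπ, Measure.add_apply, Measure.smul_apply, Measure.smul_apply, measure_univ,
        measure_univ, smul_eq_mul, smul_eq_mul, mul_one, mul_one, hw]
    have hcostρ : transportCost (π.map fun γ : C(unitInterval, X) => (γ 0, γ 1)) ≤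
        transportCost σbE := by
      have hc1 : transportCost ρ₁ ≤ transportCost σb1 := hπ₁.2.2.2 σb1 ⟨hp1, rfl, rfl⟩
      have hc2 : transportCost ρ₂ ≤ transportCost σb2 := hπ₂.2.2.2 σb2 ⟨hp2, rfl, rfl⟩
      calc transportCost (π.map fun γ : C(unitInterval, X) => (γ 0, γ 1))
          = w₁ * transportCost ρ₁ + w₂ * transportCost ρ₂ := by
            rw [hρdecomp]; exact cost_comb _ _ _ _
        _ ≤ w₁ * transportCost σb1 + w₂ * transportCost σb2 :=
            add_le_add (mul_le_mul_right hc1 _) (mul_le_mul_right hc2 _)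
        _ = transportCost σbE := by
            rw [hdecomp]; exact (cost_comb _ _ _ _).symm
    have hπOGP : IsOptGeoPlan μb νb π := by
      refine ⟨hπprob, ?_, ⟨⟨Measure.isProbabilityMeasure_map hem.aemeasurable, hρfst, hρsnd⟩, ?_⟩⟩
      · rw [hπ, Measure.add_apply, Measure.smul_apply, Measure.smul_apply, hπ₁.2.1, hπ₂.2.1]
        simp
      · intro τ hτ
        exact le_trans hcostρ (hoptE.2 τ hτ)
    obtain ⟨S, hSm, hπeq, hS0⟩ := hmap _ _ hP2μb hP2νb π hπOGP
    have hev1 : Continuous fun γ : C(unitInterval, X) => γ 1 := by fun_prop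
    set T : X → X := fun x => S x 1 with hT
    have hTm : Measurable T := hev1.measurable.comp hSm
    have hρT : π.map (fun γ : C(unitInterval, X) => (γ 0, γ 1)) = μb.map fun x => (x, T x) := by
      rw [hπeq, Measure.map_map hem hSm]
      refine Measure.map_congr ?_
      filter_upwards [hS0] with x hx
      show (S x 0, S x 1) = (x, T x)
      rw [hx, hT]
    set G := {p : X × X | p.2 = T p.1} with hG
    have hGm : MeasurableSet G :=
      measurable_snd.stronglyMeasurable.measurableSet_eq_fun
        (hTm.comp measurable_fst).stronglyMeasurable
    have hρG : (π.map fun γ : C(unitInterval, X) => (γ 0, γ 1)) Gᶜ = 0 := by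
      have hgm : Measurable fun x : X => (x, T x) := measurable_id.prodMk hTm
      rw [hρT, Measure.map_apply hgm hGm.compl]
      convert measure_empty
      · ext x
        simp [hG]
      · infer_instance
    have h12 : w₁ * ρ₁ Gᶜ + w₂ * ρ₂ Gᶜ = 0 := by
      have : (w₁ • ρ₁ + w₂ • ρ₂) Gᶜ = 0 := by rw [← hρdecomp]; exact hρG
      simpa [Measure.add_apply, Measure.smul_apply] using this
    have hρ₁G : ρ₁ Gᶜ = 0 := by
      rcases mul_eq_zero.1 (add_eq_zero.1 h12).1 with h | h
      · exact absurd h hw₁0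
      · exact h
    have hρ₂G : ρ₂ Gᶜ = 0 := by
      rcases mul_eq_zero.1 (add_eq_zero.1 h12).2 with h | h
      · exact absurd h hw₂0
      · exact h
    set N := {x | T x ∉ Uset} with hN
    have hNm : MeasurableSet N := hTm hUm.compl
    have hν₁U : ν₁ Usetᶜ = 0 := by
      rw [hν₁, Measure.map_apply measurable_snd hUm.compl, hσb1, Measure.smul_apply,
        Measure.restrict_apply (measurable_snd hUm.compl), presnd, hS1, Set.prod_inter_prod,
        Set.univ_inter, Set.compl_inter_self]
      simp
    have hν₂U : ν₂ Uset = 0 := by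
      rw [hν₂, Measure.map_apply measurable_snd hUm, hσb2, Measure.smul_apply,
        Measure.restrict_apply (measurable_snd hUm), presnd, hS2, Set.prod_inter_prod,
        Set.univ_inter, Set.inter_compl_self]
      simp
    have hα₁N : α₁ N = 0 := by
      have hside : ρ₁ ((univ : Set X) ×ˢ Usetᶜ) = 0 := by
        rw [← presnd, ← Measure.map_apply measurable_snd hUm.compl, hρ₁snd]
        exact hν₁U
      have h1 : ρ₁ (Prod.fst ⁻¹' N) = 0 := by
        refine measure_mono_null ?_ (measure_union_null hρ₁G hside)
        rintro ⟨x, y⟩ hp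
        by_cases hgr : y = T x
        · exact Or.inr ⟨trivial, by rw [hgr]; exact hp⟩
        · exact Or.inl hgr
      rw [← hρ₁fst, Measure.map_apply measurable_fst hNm]
      exact h1
    have hα₂Nc : α₂ Nᶜ = 0 := by
      have hside : ρ₂ ((univ : Set X) ×ˢ Uset) = 0 := by
        rw [← presnd, ← Measure.map_apply measurable_snd hUm, hρ₂snd]
        exact hν₂U
      have h1 : ρ₂ (Prod.fst ⁻¹' Nᶜ) = 0 := by
        refine measure_mono_null ?_ (measure_union_null hρ₂G hside)
        rintro ⟨x, y⟩ hp
        have hTx : T x ∈ Uset := not_not.1 hp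
        by_cases hgr : y = T x
        · exact Or.inr ⟨trivial, by rw [hgr]; exact hTx⟩
        · exact Or.inl hgr
      rw [← hρ₂fst, Measure.map_apply measurable_fst hNm.compl]
      exact h1
    haveI hα₂prob : IsProbabilityMeasure α₂ :=
      Measure.isProbabilityMeasure_map measurable_fst.aemeasurable
    have hα₂N : α₂ N = 1 := by
      have h := measure_compl hNm.compl (measure_ne_top α₂ _)
      rw [compl_compl, measure_univ, hα₂Nc, tsub_zero] at h
      exact h
    have hσN1 : σ ((N ∩ E) ×ˢ Uset) = 0 := by
      have hcalc : α₁ N = (σ S1)⁻¹ * σ ((N ∩ E) ×ˢ Uset) := by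
        rw [hα₁, Measure.map_apply measurable_fst hNm, hσb1, Measure.smul_apply,
          Measure.restrict_apply (measurable_fst hNm), prefst, hS1, Set.prod_inter_prod,
          Set.univ_inter, smul_eq_mul]
      rw [hcalc] at hα₁N
      rcases mul_eq_zero.1 hα₁N with h | h
      · exact absurd h (ENNReal.inv_ne_zero.2 hat)
      · exact h
    have hμN : μ₀ (N ∩ E) = 0 := by
      have hint : ∫⁻ x in N ∩ E, g x ∂μ₀ = 0 := by
        rw [← hwd _ hUm _ (hNm.inter hEm)]
        exact hσN1
      have h'' := (lintegral_eq_zero_iff (hfm _)).1 hint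
      rw [Filter.EventuallyEq, ae_restrict_iff' (hNm.inter hEm)] at h''
      have h' : ∀ᵐ x ∂μ₀, x ∉ N ∩ E := by
        filter_upwards [h''] with x hx hmem
        exact hmem.2.1.ne' (hx hmem)
      rw [ae_iff] at h'
      simpa [not_not] using h'
    have hα₂N0 : α₂ N = 0 := by
      have hcalc : α₂ N = (σ S2)⁻¹ * σ ((N ∩ E) ×ˢ Usetᶜ) := by
        rw [hα₂, Measure.map_apply measurable_fst hNm, hσb2, Measure.smul_apply,
          Measure.restrict_apply (measurable_fst hNm), prefst, hS2, Set.prod_inter_prod,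
          Set.univ_inter, smul_eq_mul]
      have hle : σ ((N ∩ E) ×ˢ Usetᶜ) ≤ μ₀ (N ∩ E) := by
        rw [← hμ₀B _ (hNm.inter hEm)]
        exact measure_mono (Set.prod_mono_right (subset_univ _))
      rw [hμN] at hle
      rw [hcalc, le_antisymm hle zero_le, mul_zero]
    exact absurd (hα₂N0.symm.trans hα₂N) zero_ne_one

/-- (Proposition `ylim`) let `(X,d,𝔪)` be a complete separable metric
measure space such that for all `μ₀, μ₁ ∈ 𝒫₂^{ac}(X)` the set `OptGeo(μ₀,μ₁)` is
nonempty and every optimal dynamical plan in it is induced by a map. Then for all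
`μ₀, μ₁ ∈ 𝒫₂^{ac}(X)` every optimal plan `σ ∈ Opt(μ₀,μ₁)` is induced by a map; in
particular the optimal plan is unique. -/
theorem stmt_10 [CompleteSpace X] [TopologicalSpace.SeparableSpace X]
    (𝔪 : Measure X)
    (hexists : ∀ μ₀ μ₁ : Measure X, IsP2ac 𝔪 μ₀ → IsP2ac 𝔪 μ₁ →
      ∃ π : Measure C(unitInterval, X), IsOptGeoPlan μ₀ μ₁ π)
    (hmap : ∀ μ₀ μ₁ : Measure X, IsP2ac 𝔪 μ₀ → IsP2ac 𝔪 μ₁ →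
      ∀ π : Measure C(unitInterval, X), IsOptGeoPlan μ₀ μ₁ π →
        GeoPlanInducedByMap μ₀ π) :
    ∀ μ₀ μ₁ : Measure X, IsP2ac 𝔪 μ₀ → IsP2ac 𝔪 μ₁ →
      (∀ σ : Measure (X × X), IsOptimalPlan μ₀ μ₁ σ → PlanInducedByMap μ₀ σ) ∧
      ∀ σ σ' : Measure (X × X), IsOptimalPlan μ₀ μ₁ σ → IsOptimalPlan μ₀ μ₁ σ' →
        σ = σ' := by
  intro μ₀ μ₁ h₀ h₁
  haveI : SecondCountableTopology X := UniformSpace.secondCountable_of_separable X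
  have key : ∀ σ : Measure (X × X), IsOptimalPlan μ₀ μ₁ σ → PlanInducedByMap μ₀ σ :=
    fun σ hσ => optimal_plan_induced 𝔪 hexists hmap μ₀ μ₁ h₀ h₁ σ hσ
  refine ⟨key, ?_⟩
  intro σ σ' hσ hσ'
  haveI := hσ.1.1
  haveI := hσ'.1.1
  set σ'' := (2 : ℝ≥0∞)⁻¹ • (σ + σ') with hσ''
  have h2ne : (2 : ℝ≥0∞) ≠ 0 := two_ne_zero
  have h2nt : (2 : ℝ≥0∞) ≠ ∞ := ENNReal.ofNat_ne_top
  have havg : ∀ ρ ρ' : Measure X, ρ = ρ' → (2 : ℝ≥0∞)⁻¹ • (ρ + ρ') = ρ := by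
    intro ρ ρ' h
    rw [← h, ← two_smul ℝ≥0∞ ρ, smul_smul, ENNReal.inv_mul_cancel h2ne h2nt, one_smul]
  have hcoup : IsCoupling μ₀ μ₁ σ'' := by
    refine ⟨?_, ?_, ?_⟩
    · constructor
      rw [hσ'', Measure.smul_apply, Measure.add_apply, measure_univ, measure_univ, smul_eq_mul,
        one_add_one_eq_two, ENNReal.inv_mul_cancel h2ne h2nt]
    · rw [hσ'', Measure.map_smul, Measure.map_add _ _ measurable_fst, hσ.1.2.1, hσ'.1.2.1]
      exact havg _ _ rfl
    · rw [hσ'', Measure.map_smul, Measure.map_add _ _ measurable_snd, hσ.1.2.2, hσ'.1.2.2]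
      exact havg _ _ rfl
  have hopt'' : IsOptimalPlan μ₀ μ₁ σ'' := by
    refine ⟨hcoup, fun τ hτ => ?_⟩
    have h1 := hσ.2 τ hτ
    have h2 := hσ'.2 τ hτ
    have hc : transportCost σ'' = 2⁻¹ * (transportCost σ + transportCost σ') := by
      rw [hσ'', transportCost_smul, transportCost_add]
    rw [hc]
    calc (2 : ℝ≥0∞)⁻¹ * (transportCost σ + transportCost σ')
        ≤ 2⁻¹ * (transportCost τ + transportCost τ) := mul_le_mul_right (add_le_add h1 h2) _
      _ = transportCost τ := by
          rw [← two_mul, ← mul_assoc, ENNReal.inv_mul_cancel h2ne h2nt, one_mul]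
  obtain ⟨T, hT, hTeq⟩ := key σ'' hopt''
  have hGm : MeasurableSet {p : X × X | p.2 = T p.1} :=
    measurable_snd.stronglyMeasurable.measurableSet_eq_fun
      (hT.comp measurable_fst).stronglyMeasurable
  have h''G : σ'' {p : X × X | p.2 = T p.1}ᶜ = 0 := by
    have hgm : Measurable fun x : X => (x, T x) := measurable_id.prodMk hT
    rw [hTeq, Measure.map_apply hgm hGm.compl]
    convert measure_empty
    · ext x; simp
    · infer_instance
  have hboth : σ {p : X × X | p.2 = T p.1}ᶜ = 0 ∧ σ' {p : X × X | p.2 = T p.1}ᶜ = 0 := by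
    have h0 : (2 : ℝ≥0∞)⁻¹ * (σ {p : X × X | p.2 = T p.1}ᶜ + σ' {p : X × X | p.2 = T p.1}ᶜ) = 0 := by
      rw [← smul_eq_mul, ← Measure.add_apply, ← Measure.smul_apply, ← hσ'']
      exact h''G
    rcases mul_eq_zero.1 h0 with h | h
    · exact absurd h (ENNReal.inv_ne_zero.2 h2nt)
    · exact add_eq_zero.1 h
  have hae : ∀ᵐ p ∂σ, p.2 = T p.1 := by
    rw [ae_iff]
    rw [← Set.compl_setOf]
    exact hboth.1
  have hae' : ∀ᵐ p ∂σ', p.2 = T p.1 := by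
    rw [ae_iff]
    rw [← Set.compl_setOf]
    exact hboth.2
  rw [eq_map_of_ae_graph hσ.1.2.1 hT hae, eq_map_of_ae_graph hσ'.1.2.1 hT hae']

end
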